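/- Let d be odd and let ψ be a state vector on (ZMod d)^n with everywhere nonnegative Wigner function. Then |ψ| is constant on the support of ψ: for any two points x, q with ψ(x) ≠ 0 and ψ(q) ≠ 0, |ψ(x)| = |ψ(q)|. -/

import Mathlib

open scoped BigOperators
open Finset Matrix
open scoped ComplexOrder

attribute [instance] Classical.propDecidable

/-- The character `χ(t) = exp(2πit/d)` on `ZMod d`. -/
noncomputable def chi (d : ℕ) (t : ZMod d) : ℂ :=
  Complex.exp (2 * Real.pi * Complex.I * (t.val : ℂ) / (d : ℂ))

/-- The standard symplectic form on `(Fin n → R) × (Fin n → R)`. -/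
def symp (R : Type) [CommRing R] (n : ℕ) (v w : (Fin n → R) × (Fin n → R)) : R :=
  (∑ i, v.1 i * w.2 i) - ∑ i, v.2 i * w.1 i

/-- Single-particle Weyl operator `w(p,q) = χ(-2⁻¹pq) ẑ(p) x̂(q)` on `ℂ^d`. -/
noncomputable def weyl1 (d : ℕ) (p q : ZMod d) : Matrix (ZMod d) (ZMod d) ℂ :=
  Matrix.of fun x y => chi d (-(2⁻¹ : ZMod d) * p * q + p * x) * (if y = x - q then 1 else 0)

/-- Multi-particle Weyl operator on `(ℂ^d)^{⊗n}` in coordinates. -/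
noncomputable def weyl (d n : ℕ) (p q : Fin n → ZMod d) :
    Matrix (Fin n → ZMod d) (Fin n → ZMod d) ℂ :=
  Matrix.of fun x y =>
    chi d (-(2⁻¹ : ZMod d) * (∑ i, p i * q i) + ∑ i, p i * x i) * (if y = x - q then 1 else 0)

/-- Weyl operator indexed by a phase space point. -/
noncomputable def weylV (d n : ℕ) (v : (Fin n → ZMod d) × (Fin n → ZMod d)) :
    Matrix (Fin n → ZMod d) (Fin n → ZMod d) ℂ :=
  weyl d n v.1 v.2

/-- Action of the Weyl operator on wave functions:
`(w(p,q)ψ)(y) = χ(-2⁻¹pq + py) ψ(y-q)`. -/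
noncomputable def weylAct (d n : ℕ) (p q : Fin n → ZMod d) (ψ : (Fin n → ZMod d) → ℂ) :
    (Fin n → ZMod d) → ℂ :=
  fun y => chi d (-(2⁻¹ : ZMod d) * (∑ i, p i * q i) + ∑ i, p i * y i) * ψ (y - q)

/-- Wigner function of a pure state `ψ`. -/
noncomputable def wignerPure (d n : ℕ) [NeZero d] (ψ : (Fin n → ZMod d) → ℂ)
    (p q : Fin n → ZMod d) : ℂ :=
  ((d : ℂ) ^ n)⁻¹ * ∑ ξ : Fin n → ZMod d, chi d (-(∑ i, ξ i * p i)) *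
    (starRingEnd ℂ) (ψ (q - (2⁻¹ : ZMod d) • ξ)) * ψ (q + (2⁻¹ : ZMod d) • ξ)

section aux
variable {d : ℕ} [NeZero d]

lemma chi_eq_pow (t : ZMod d) :
    chi d t = Complex.exp (2 * Real.pi * Complex.I / d) ^ t.val := by
  rw [chi, ← Complex.exp_nat_mul]
  congr 1
  ring

lemma zeta_pow_d : Complex.exp (2 * Real.pi * Complex.I / d) ^ d = 1 := by
  rw [← Complex.exp_nat_mul]
  have hd : (d:ℂ) ≠ 0 := Nat.cast_ne_zero.2 (NeZero.ne d)
  rw [show (d:ℂ) * (2 * Real.pi * Complex.I / d) = 2 * Real.pi * Complex.I by field_simp]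
  exact Complex.exp_two_pi_mul_I

lemma chi_add (s t : ZMod d) : chi d (s + t) = chi d s * chi d t := by
  rw [chi_eq_pow, chi_eq_pow, chi_eq_pow, ← pow_add, ZMod.val_add]
  conv_rhs => rw [← Nat.div_add_mod (s.val + t.val) d]
  rw [pow_add, pow_mul, zeta_pow_d, one_pow, one_mul]

lemma chi_zero : chi d 0 = 1 := by
  rw [chi_eq_pow, ZMod.val_zero, pow_zero]

lemma chi_abs (t : ZMod d) : ‖chi d t‖ = 1 := by
  rw [chi, show 2 * Real.pi * Complex.I * (t.val : ℂ) / d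
      = ((2 * Real.pi * t.val / d : ℝ) : ℂ) * Complex.I by push_cast; ring]
  exact Complex.norm_exp_ofReal_mul_I _

lemma chi_ne_one {c : ZMod d} (hc : c ≠ 0) : chi d c ≠ 1 := by
  rw [chi]
  intro h
  rw [Complex.exp_eq_one_iff] at h
  obtain ⟨k, hk⟩ := h
  have hd : (d:ℂ) ≠ 0 := Nat.cast_ne_zero.2 (NeZero.ne d)
  have hc2 : (c.val : ℂ) = k * d := by
    have hπ : (Real.pi:ℂ) ≠ 0 := by exact_mod_cast Real.pi_ne_zero
    have hne : (2 * (Real.pi:ℂ) * Complex.I) ≠ 0 := by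
      simp [Complex.I_ne_zero, hπ]
    rw [div_eq_iff hd] at hk
    refine mul_left_cancel₀ hne ?_
    linear_combination hk
  have hz : (c.val : ℤ) = k * d := by exact_mod_cast hc2
  have hdvd : d ∣ c.val := by
    have : (d:ℤ) ∣ (c.val : ℤ) := ⟨k, by linarith⟩
    exact_mod_cast this
  have := Nat.eq_zero_of_dvd_of_lt hdvd (ZMod.val_lt c)
  · exact hc ((ZMod.val_eq_zero c).mp this)

end aux

section sums
variable {d : ℕ} [NeZero d] {n : ℕ}

lemma sum_chi (b : Fin n → ZMod d) :
    ∑ p : Fin n → ZMod d, chi d (∑ i, b i * p i)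
      = if b = 0 then ((d:ℂ))^n else 0 := by
  split_ifs with hb
  · subst hb
    simp only [Pi.zero_apply, zero_mul, Finset.sum_const_zero, chi_zero]
    simp [Finset.card_univ, ZMod.card]
  · obtain ⟨i0, hi0⟩ : ∃ i, b i ≠ 0 := by
      by_contra hcon; push_neg at hcon; exact hb (funext hcon)
    set s : Fin n → ZMod d := Pi.single i0 1 with hs
    have hshift : (∑ p : Fin n → ZMod d, chi d (∑ i, b i * p i))
        = chi d (b i0) * ∑ p : Fin n → ZMod d, chi d (∑ i, b i * p i) := by
      conv_lhs => rw [(Fintype.sum_equiv (Equiv.addRight s)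
          (fun p => chi d (∑ i, b i * (p i + s i))) _
          (fun p => rfl)).symm]
      have h2 : ∀ p : Fin n → ZMod d,
          (∑ i, b i * (p i + s i)) = (∑ i, b i * p i) + b i0 := by
        intro p
        have : ∑ i, b i * s i = b i0 := by
          simp [hs, Pi.single_apply, mul_ite, Finset.sum_ite_eq']
        rw [← this, ← Finset.sum_add_distrib]
        exact Finset.sum_congr rfl fun i _ => by ring
      simp_rw [h2, chi_add]
      rw [← Finset.sum_mul, mul_comm]
    have : (chi d (b i0) - 1) * ∑ p : Fin n → ZMod d, chi d (∑ i, b i * p i) = 0 := by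
      linear_combination -hshift
    rcases mul_eq_zero.mp this with h | h
    · exact absurd (by linear_combination h) (chi_ne_one hi0)
    · exact h
end sums


section fourierSec
variable {d : ℕ} [NeZero d] {n : ℕ}

lemma fourierW (ψ : (Fin n → ZMod d) → ℂ) (a q : Fin n → ZMod d) :
    ∑ p : Fin n → ZMod d, chi d (∑ i, a i * p i) * wignerPure d n ψ p q
      = (starRingEnd ℂ) (ψ (q - (2⁻¹ : ZMod d) • a)) * ψ (q + (2⁻¹ : ZMod d) • a) := by
  have hdn : ((d:ℂ))^n ≠ 0 := pow_ne_zero _ (Nat.cast_ne_zero.2 (NeZero.ne d))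
  unfold wignerPure
  have hterm : ∀ p ξ : Fin n → ZMod d,
      chi d (∑ i, a i * p i) * chi d (-(∑ i, ξ i * p i))
        = chi d (∑ i, (a i - ξ i) * p i) := by
    intro p ξ
    rw [← chi_add]
    congr 1
    rw [← sub_eq_add_neg, ← Finset.sum_sub_distrib]
    exact Finset.sum_congr rfl fun i _ => (sub_mul _ _ _).symm
  simp_rw [Finset.mul_sum]
  rw [Finset.sum_comm]
  have hinner : ∀ ξ : Fin n → ZMod d,
      (∑ p : Fin n → ZMod d, chi d (∑ i, a i * p i) *
        (((d : ℂ) ^ n)⁻¹ * (chi d (-(∑ i, ξ i * p i)) *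
          (starRingEnd ℂ) (ψ (q - (2⁻¹ : ZMod d) • ξ)) * ψ (q + (2⁻¹ : ZMod d) • ξ))))
      = ((d : ℂ) ^ n)⁻¹ * ((if ξ = a then ((d:ℂ))^n else 0) *
          ((starRingEnd ℂ) (ψ (q - (2⁻¹ : ZMod d) • ξ)) * ψ (q + (2⁻¹ : ZMod d) • ξ))) := by
    intro ξ
    have h1 : ∀ p : Fin n → ZMod d,
        chi d (∑ i, a i * p i) * (((d : ℂ) ^ n)⁻¹ * (chi d (-(∑ i, ξ i * p i)) *
          (starRingEnd ℂ) (ψ (q - (2⁻¹ : ZMod d) • ξ)) * ψ (q + (2⁻¹ : ZMod d) • ξ)))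
        = ((d : ℂ) ^ n)⁻¹ * (chi d (∑ i, (a i - ξ i) * p i) *
          ((starRingEnd ℂ) (ψ (q - (2⁻¹ : ZMod d) • ξ)) * ψ (q + (2⁻¹ : ZMod d) • ξ))) := by
      intro p
      rw [← hterm p ξ]
      ring
    simp_rw [h1, ← Finset.mul_sum, ← Finset.sum_mul]
    have h2 : (∑ p : Fin n → ZMod d, chi d (∑ i, (a i - ξ i) * p i))
        = if ξ = a then ((d:ℂ))^n else 0 := by
      have h3 := sum_chi (a - ξ)
      simp only [Pi.sub_apply] at h3
      rw [h3]
      congr 1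
      simp [sub_eq_zero, eq_comm]
    rw [h2]
  simp_rw [hinner]
  rw [← Finset.mul_sum]
  simp_rw [ite_mul, zero_mul]
  rw [Finset.sum_ite_eq' Finset.univ a]
  simp only [Finset.mem_univ, if_true]
  rw [← mul_assoc, ← mul_assoc, inv_mul_cancel₀ hdn, one_mul]


/-- A state with nonnegative Wigner function has constant modulus on its
support. -/
theorem constant_modulus_on_support (d n : ℕ) [NeZero d] (hd : Odd d)
    (ψ : (Fin n → ZMod d) → ℂ)
    (hψ : ∑ x : Fin n → ZMod d, Complex.normSq (ψ x) = 1)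
    (hpos : ∀ p q : Fin n → ZMod d, 0 ≤ wignerPure d n ψ p q)
    (x q : Fin n → ZMod d) (hx : ψ x ≠ 0) (hq : ψ q ≠ 0) :
    ‖ψ x‖ = ‖ψ q‖ := by
  classical
  set f : (Fin n → ZMod d) → ℝ := fun y => ‖ψ y‖ with hf
  have h2u : IsUnit (2 : ZMod d) := by
    have hc : Nat.Coprime 2 d := Nat.coprime_two_left.mpr hd
    have := (ZMod.isUnit_iff_coprime 2 d).mpr hc
    simpa using this
  have hinv : (2⁻¹ : ZMod d) * 2 = 1 := ZMod.inv_mul_of_unit _ h2u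
  have hre : ∀ p m : Fin n → ZMod d,
      wignerPure d n ψ p m = (((wignerPure d n ψ p m).re : ℝ) : ℂ)
        ∧ 0 ≤ (wignerPure d n ψ p m).re := by
    intro p m
    obtain ⟨h1, h2⟩ := Complex.le_def.mp (hpos p m)
    refine ⟨Complex.ext rfl ?_, by simpa using h1⟩
    simpa using h2.symm
  have sumW : ∀ m : Fin n → ZMod d,
      ∑ p : Fin n → ZMod d, (wignerPure d n ψ p m).re = Complex.normSq (ψ m) := by
    intro m
    have e0 := fourierW ψ 0 m
    simp only [Pi.zero_apply, zero_mul, Finset.sum_const_zero, chi_zero, one_mul,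
      smul_zero, sub_zero, add_zero] at e0
    have e1 : ∑ p : Fin n → ZMod d, wignerPure d n ψ p m
        = ((Complex.normSq (ψ m) : ℝ) : ℂ) := by
      rw [e0, mul_comm, Complex.mul_conj]
    have e2 : ∑ p : Fin n → ZMod d, wignerPure d n ψ p m
        = ((∑ p : Fin n → ZMod d, (wignerPure d n ψ p m).re : ℝ) : ℂ) := by
      rw [Complex.ofReal_sum]
      exact Finset.sum_congr rfl fun p _ => (hre p m).1
    rw [e2] at e1
    exact_mod_cast e1
  have key : ∀ m h : Fin n → ZMod d, f (m - h) * f (m + h) ≤ f m ^ 2 := by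
    intro m h
    have ha : (2⁻¹ : ZMod d) • ((2 : ZMod d) • h) = h := by
      funext i
      simp only [Pi.smul_apply, smul_eq_mul, ← mul_assoc, hinv, one_mul]
    have e1 := fourierW ψ ((2 : ZMod d) • h) m
    rw [ha] at e1
    have habs : f (m - h) * f (m + h)
        = ‖(∑ p : Fin n → ZMod d,
            chi d (∑ i, ((2 : ZMod d) • h) i * p i) * wignerPure d n ψ p m)‖ := by
      rw [e1, norm_mul, Complex.norm_conj]
    rw [habs]
    calc ‖(∑ p : Fin n → ZMod d,
            chi d (∑ i, ((2 : ZMod d) • h) i * p i) * wignerPure d n ψ p m)‖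
        ≤ ∑ p : Fin n → ZMod d, ‖
            (chi d (∑ i, ((2 : ZMod d) • h) i * p i) * wignerPure d n ψ p m)‖ :=
          norm_sum_le _ _
      _ = ∑ p : Fin n → ZMod d, (wignerPure d n ψ p m).re := by
          refine Finset.sum_congr rfl fun p _ => ?_
          rw [norm_mul, chi_abs, one_mul, (hre p m).1]
          simp [Complex.norm_real, abs_of_nonneg (hre p m).2]
      _ = Complex.normSq (ψ m) := sumW m
      _ = f m ^ 2 := by rw [Complex.normSq_eq_norm_sq]
  -- maximum
  obtain ⟨t0, -, ht0⟩ := Finset.exists_max_image Finset.univ f ⟨x, Finset.mem_univ x⟩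
  set M := f t0 with hM
  have hM0 : 0 < M := lt_of_lt_of_le (norm_pos_iff.mpr hx)
    (ht0 x (Finset.mem_univ x))
  have hfnn : ∀ y, 0 ≤ f y := fun y => norm_nonneg _
  -- existence of K with (2⁻¹)^K = 1
  obtain ⟨v, hv⟩ := IsUnit.of_mul_eq_one (a := (2⁻¹ : ZMod d)) 2 hinv
  obtain ⟨K, hK1, hKeq⟩ : ∃ K, 0 < K ∧ ((2⁻¹ : ZMod d))^K = 1 := by
    refine ⟨d.totient, Nat.totient_pos.mpr (Nat.pos_of_ne_zero (NeZero.ne d)), ?_⟩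
    rw [← hv, ← Units.val_pow_eq_pow_val, ZMod.pow_totient, Units.val_one]
  have claim : ∀ u : Fin n → ZMod d, ψ u ≠ 0 → f u = M := by
    intro u hu
    have hfu : 0 < f u := norm_pos_iff.mpr hu
    set g : ℕ → (Fin n → ZMod d) := fun k => t0 + ((2⁻¹ : ZMod d)^k) • (u - t0) with hg
    have hstep : ∀ k, M * f (g k) ≤ f (g (k+1)) ^ 2 := by
      intro k
      have h1 : g (k+1) - ((2⁻¹ : ZMod d)^(k+1)) • (u - t0) = t0 := by
        simp [hg]
      have hsc : ((2⁻¹ : ZMod d)^(k+1)) + ((2⁻¹ : ZMod d)^(k+1)) = (2⁻¹ : ZMod d)^k := by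
        have h22 : (2 : ZMod d) * (2⁻¹ : ZMod d) = 1 := by rw [mul_comm]; exact hinv
        calc ((2⁻¹ : ZMod d)^(k+1)) + ((2⁻¹ : ZMod d)^(k+1))
            = (2 : ZMod d) * (2⁻¹ : ZMod d) * ((2⁻¹ : ZMod d)^k) := by ring
          _ = (2⁻¹ : ZMod d)^k := by rw [h22, one_mul]
      have h2 : g (k+1) + ((2⁻¹ : ZMod d)^(k+1)) • (u - t0) = g k := by
        show t0 + ((2⁻¹ : ZMod d)^(k+1)) • (u - t0) + ((2⁻¹ : ZMod d)^(k+1)) • (u - t0)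
            = t0 + ((2⁻¹ : ZMod d)^k) • (u - t0)
        rw [add_assoc, ← add_smul, hsc]
      have h3 := key (g (k+1)) (((2⁻¹ : ZMod d)^(k+1)) • (u - t0))
      rw [h1, h2] at h3
      exact h3
    have hiter : ∀ k, M ^ (2^k - 1) * f u ≤ f (g k) ^ (2^k) := by
      intro k
      induction k with
      | zero =>
        have hgu : g 0 = u := by simp [hg]
        rw [hgu]
        norm_num
      | succ k ih =>
        have h1 : f (g (k+1)) ^ (2^(k+1)) = (f (g (k+1)) ^ 2) ^ (2^k) := by
          rw [← pow_mul, pow_succ, mul_comm 2 (2^k)]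
        rw [h1]
        have h2 : (M * f (g k)) ^ (2^k) ≤ (f (g (k+1)) ^ 2) ^ (2^k) :=
          pow_le_pow_left₀ (mul_nonneg hM0.le (hfnn _)) (hstep k) _
        have h3 : M ^ (2^k) * (M ^ (2^k - 1) * f u) ≤ M ^ (2^k) * (f (g k) ^ (2^k)) :=
          mul_le_mul_of_nonneg_left ih (pow_nonneg hM0.le _)
        have h4 : M ^ (2^k) * (f (g k) ^ (2^k)) = (M * f (g k)) ^ (2^k) :=
          (mul_pow _ _ _).symm
        have h5 : M ^ (2^(k+1) - 1) * f u = M ^ (2^k) * (M ^ (2^k - 1) * f u) := by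
          rw [← mul_assoc, ← pow_add]
          congr 2
          have : 1 ≤ 2^k := Nat.one_le_two_pow
          omega
        rw [h5]
        exact le_trans h3 (le_trans (le_of_eq h4) h2)
    have hgK : g K = u := by
      simp [hg, hKeq]
    have hfin := hiter K
    rw [hgK] at hfin
    have hsplit : f u ^ (2^K) = f u ^ (2^K - 1) * f u := by
      conv_lhs => rw [show 2^K = (2^K - 1) + 1 by have : 1 ≤ 2^K := Nat.one_le_two_pow; omega]
      rw [pow_succ]
    rw [hsplit] at hfin
    have hle : M ^ (2^K - 1) ≤ f u ^ (2^K - 1) := le_of_mul_le_mul_right hfin hfu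
    have hne : 2^K - 1 ≠ 0 := by
      have : 2 ≤ 2^K := by
        calc 2 = 2^1 := (pow_one 2).symm
        _ ≤ 2^K := Nat.pow_le_pow_right (by norm_num) hK1
      omega
    have := (pow_le_pow_iff_left₀ hM0.le (hfnn u) hne).mp hle
    exact le_antisymm (ht0 u (Finset.mem_univ u)) this
  exact (claim x hx).trans (claim q hq).symm
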